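/- Let λ₁, λ₂, ρ₁, ρ₂ > 0 with λ₁/ρ₁ ≠ λ₂/ρ₂. Let X ~ Exp(λ₁/ρ₁) and Y ~ Exp(λ₂/ρ₂) be independent. Then E[log₂(1 + X + Y)] = [ (λ₂/ρ₂)·φ′(λ₁,ρ₁) − (λ₁/ρ₁)·φ′(λ₂,ρ₂) ] / ( λ₂/ρ₂ − λ₁/ρ₁ ), where φ′(l, φ₀) = (φ₀/ln 2)·∫₀^∞ e^{−l t}/(1 + φ₀ t) dt. -/

import Mathlib

open MeasureTheory ProbabilityTheory Real Set

/-- `φ′(l, φ₀) = (φ₀/ln 2) ∫₀^∞ e^{-lt}/(1 + φ₀ t) dt`. -/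
noncomputable def phiPrime (l φ₀ : ℝ) : ℝ :=
  (φ₀ / Real.log 2) * ∫ t in Set.Ioi (0 : ℝ), Real.exp (-l * t) / (1 + φ₀ * t)

open Filter Topology

lemma intIoi {c : ℝ} (hc : 0 < c) (u : ℝ) :
    ∫ x in Ioi u, c * Real.exp (-(c*x)) = Real.exp (-(c*u)) := by
  have h := integral_Ioi_of_hasDerivAt_of_tendsto'
    (f := fun x => -Real.exp (-(c*x))) (f' := fun x => c * Real.exp (-(c*x))) (a := u) (m := 0)
    (fun x _ => hasDerivAt_neg_exp_mul_exp)
    (by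
      have := (exp_neg_integrableOn_Ioi u hc).const_mul c
      exact (by simpa [neg_mul, mul_comm] using this :
        Integrable (fun x : ℝ => c * Real.exp (-(c*x))) (volume.restrict (Ioi u))))
    (by
      have : Tendsto (fun x : ℝ => Real.exp (-(c*x))) atTop (𝓝 0) := by
        have h0 : Tendsto (fun x : ℝ => c * x) atTop atTop :=
          Tendsto.const_mul_atTop hc tendsto_id
        exact tendsto_exp_neg_atTop_nhds_zero.comp h0
      simpa using this.neg)
  simpa using h

lemma expo_integrableOn_Ioi {c : ℝ} (hc : 0 < c) (u : ℝ) :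
    IntegrableOn (fun x : ℝ => c * Real.exp (-(c*x))) (Ioi u) := by
  have := (exp_neg_integrableOn_Ioi u hc).const_mul c
  exact (by simpa [neg_mul, mul_comm] using this :
    Integrable (fun x : ℝ => c * Real.exp (-(c*x))) (volume.restrict (Ioi u)))

lemma tailExp {c : ℝ} (hc : 0 < c) {u : ℝ} (hu : 0 ≤ u) :
    expMeasure c (Ici u) = ENNReal.ofReal (Real.exp (-(c*u))) := by
  have hpdf : Measurable (exponentialPDF c) :=
    (measurable_exponentialPDFReal c).ennreal_ofReal
  have h1 : expMeasure c (Ici u) = ∫⁻ x in Ici u, exponentialPDF c x := by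
    rw [expMeasure, gammaMeasure, withDensity_apply _ measurableSet_Ici]
    rfl
  rw [h1]
  have h2 : ∫⁻ x in Ici u, exponentialPDF c x = ∫⁻ x in Ioi u, exponentialPDF c x :=
    (setLIntegral_congr (Ioi_ae_eq_Ici (a := u))).symm
  rw [h2, setLIntegral_congr_fun measurableSet_Ioi
    (fun x (hx : u < x) => exponentialPDF_of_nonneg (le_trans hu hx.le)),
    ← ofReal_integral_eq_lintegral_ofReal (expo_integrableOn_Ioi hc u)
      (ae_of_all _ fun x => by positivity), intIoi hc u]

lemma tailExp_nonpos {c : ℝ} (hc : 0 < c) {u : ℝ} (hu : u ≤ 0) :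
    expMeasure c (Ici u) = 1 := by
  have : IsProbabilityMeasure (expMeasure c) := isProbabilityMeasure_expMeasure hc
  have h0 : expMeasure c (Iio u) = 0 := by
    rw [expMeasure, gammaMeasure, withDensity_apply _ measurableSet_Iio]
    exact lintegral_exponentialPDF_of_nonpos hu
  rw [← compl_Iio, measure_compl measurableSet_Iio (measure_ne_top _ _), h0,
    measure_univ, tsub_zero]

lemma log_eq_integral {s : ℝ} (hs : 0 ≤ s) :
    ∫ t in (0:ℝ)..s, (1+t)⁻¹ = Real.log (1+s) := by
  have key : ∀ t ∈ Set.uIcc (0:ℝ) s, HasDerivAt (fun t => Real.log (1+t)) (1+t)⁻¹ t := by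
    intro t ht
    rw [Set.uIcc_of_le hs] at ht
    have h1 : (0:ℝ) < 1 + t := by nlinarith [ht.1]
    have := ((hasDerivAt_id t).const_add 1).log h1.ne'
    simpa using this
  have hint : IntervalIntegrable (fun t : ℝ => (1+t)⁻¹) volume 0 s := by
    apply ContinuousOn.intervalIntegrable
    apply ContinuousOn.inv₀ (by fun_prop)
    intro t ht
    rw [Set.uIcc_of_le hs] at ht
    nlinarith [ht.1]
  have := intervalIntegral.integral_eq_sub_of_hasDerivAt key hint
  simpa using this

lemma tail_nonneg {a b t : ℝ} (ha : 0 < a) (hb : 0 < b) (hab : a ≠ b) (ht : 0 ≤ t) :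
    0 ≤ (b * Real.exp (-(a*t)) - a * Real.exp (-(b*t))) / (b - a) := by
  rcases lt_or_gt_of_ne hab with h | h
  · apply div_nonneg _ (by linarith)
    have h1 : Real.exp (-(b*t)) ≤ Real.exp (-(a*t)) := by
      apply Real.exp_le_exp.2; nlinarith
    nlinarith [Real.exp_pos (-(b*t)), Real.exp_pos (-(a*t))]
  · apply div_nonneg_of_nonpos _ (by linarith)
    have h1 : Real.exp (-(a*t)) ≤ Real.exp (-(b*t)) := by
      apply Real.exp_le_exp.2; nlinarith
    nlinarith [Real.exp_pos (-(b*t)), Real.exp_pos (-(a*t))]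

lemma integrableOn_exp_div {c : ℝ} (hc : 0 < c) :
    IntegrableOn (fun t : ℝ => Real.exp (-(c*t)) / (1+t)) (Ioi 0) := by
  apply Integrable.mono (g := fun t : ℝ => Real.exp (-c*t)) (exp_neg_integrableOn_Ioi 0 hc)
  · apply Measurable.aestronglyMeasurable
    fun_prop
  · filter_upwards [ae_restrict_mem measurableSet_Ioi] with t (ht : 0 < t)
    have h1 : (1:ℝ) ≤ 1 + t := by linarith
    rw [Real.norm_eq_abs, Real.norm_eq_abs, abs_of_nonneg (by positivity),
      abs_of_nonneg (Real.exp_pos _).le, neg_mul]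
    calc Real.exp (-(c*t)) / (1+t) ≤ Real.exp (-(c*t)) / 1 := by
          apply div_le_div_of_nonneg_left (Real.exp_pos _).le one_pos h1
      _ = Real.exp (-(c*t)) := by ring

lemma int_exp_mul {c : ℝ} (hc : c ≠ 0) (t : ℝ) :
    ∫ x in (0:ℝ)..t, Real.exp (c*x) = (Real.exp (c*t) - 1)/c := by
  have key : ∀ x ∈ Set.uIcc (0:ℝ) t,
      HasDerivAt (fun x => Real.exp (c*x)/c) (Real.exp (c*x)) x := by
    intro x _
    have h := (((hasDerivAt_id x).const_mul c).exp).div_const c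
    rw [show Real.exp (c*x) = Real.exp (c*x) * c / c by field_simp]
    convert h using 2
    all_goals (try rfl)
    all_goals simp
  have := intervalIntegral.integral_eq_sub_of_hasDerivAt key
    (Continuous.intervalIntegrable (by fun_prop) _ _)
  simpa [sub_div] using this

lemma phiPrime_eq {l ρ : ℝ} (hρ : 0 < ρ) :
    phiPrime l ρ = (1 / Real.log 2) * ∫ t in Ioi (0:ℝ), Real.exp (-(l/ρ*t)) / (1+t) := by
  have h := integral_comp_mul_left_Ioi (fun s => Real.exp (-(l/ρ*s))/(1+s)) 0 hρ
  simp only [mul_zero, smul_eq_mul] at h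
  have heq : (fun x : ℝ => Real.exp (-(l/ρ*(ρ*x)))/(1+ρ*x)) = fun x : ℝ => Real.exp (-l*x)/(1+ρ*x) := by
    funext x
    congr 2
    field_simp
  rw [heq] at h
  rw [phiPrime, h]
  field_simp

lemma tail_sum {a b : ℝ} (ha : 0 < a) (hb : 0 < b) (hab : a ≠ b) {t : ℝ} (ht : 0 < t) :
    ((expMeasure a).prod (expMeasure b)) {p : ℝ × ℝ | t ≤ p.1 + p.2}
      = ENNReal.ofReal ((b * Real.exp (-(a*t)) - a * Real.exp (-(b*t))) / (b - a)) := by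
  have hPa : IsProbabilityMeasure (expMeasure a) := isProbabilityMeasure_expMeasure ha
  have hPb : IsProbabilityMeasure (expMeasure b) := isProbabilityMeasure_expMeasure hb
  have hs : MeasurableSet {p : ℝ × ℝ | t ≤ p.1 + p.2} :=
    measurableSet_le measurable_const (by fun_prop)
  rw [Measure.prod_apply hs]
  have hslice : ∀ x : ℝ, (Prod.mk x ⁻¹' {p : ℝ × ℝ | t ≤ p.1 + p.2}) = Ici (t - x) := by
    intro x
    ext y
    simp [Set.mem_Ici, sub_le_iff_le_add', add_comm]
  simp_rw [hslice]
  have hmeas : Measurable fun x : ℝ => expMeasure b (Ici (t - x)) := by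
    have := measurable_measure_prodMk_left (ν := expMeasure b) hs
    simp_rw [hslice] at this
    exact this
  have hpdfa : Measurable (exponentialPDF a) :=
    (measurable_exponentialPDFReal a).ennreal_ofReal
  rw [show expMeasure a = volume.withDensity (exponentialPDF a) from rfl,
    lintegral_withDensity_eq_lintegral_mul volume hpdfa hmeas]
  rw [← lintegral_add_compl (fun x => (exponentialPDF a * fun x => expMeasure b (Ici (t - x))) x)
    measurableSet_Iio (A := Iio (0:ℝ)), compl_Iio]
  have h0 : ∫⁻ x in Iio (0:ℝ), (exponentialPDF a * fun x => expMeasure b (Ici (t - x))) x = 0 := by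
    have hz : ∀ᵐ x ∂(volume.restrict (Iio (0:ℝ))),
        (exponentialPDF a * fun x => expMeasure b (Ici (t - x))) x = 0 := by
      filter_upwards [ae_restrict_mem measurableSet_Iio] with x (hx : x < 0)
      simp [exponentialPDF_of_neg hx]
    rw [lintegral_congr_ae hz, lintegral_zero]
  rw [h0, zero_add, ← Ico_union_Ici_eq_Ici ht.le,
    lintegral_union measurableSet_Ici (Disjoint.mono_left Ico_subset_Iio_self (Iio_disjoint_Ici le_rfl))]
  set E1 := Real.exp (-(a*t)) with hE1
  set E2 := Real.exp (-(b*t)) with hE2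
  have hcne : b - a ≠ 0 := sub_ne_zero.2 (Ne.symm hab)
  have hExp : Real.exp ((b-a)*t) * E2 = E1 := by
    rw [hE1, hE2, ← Real.exp_add]; ring_nf
  -- piece 1
  have hcont : Continuous fun x : ℝ => a * Real.exp (-(a*x)) * Real.exp (-(b*(t-x))) := by fun_prop
  have hint1 : IntegrableOn (fun x : ℝ => a * Real.exp (-(a*x)) * Real.exp (-(b*(t-x)))) (Ico 0 t) :=
    (hcont.integrableOn_Icc).mono_set Ico_subset_Icc_self
  have hp1 : ∫⁻ x in Ico 0 t, (exponentialPDF a * fun x => expMeasure b (Ici (t - x))) x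
      = ENNReal.ofReal (∫ x in Ico 0 t, a * Real.exp (-(a*x)) * Real.exp (-(b*(t-x)))) := by
    rw [setLIntegral_congr_fun measurableSet_Ico (fun x hx => ?_),
      ← ofReal_integral_eq_lintegral_ofReal hint1 (ae_of_all _ fun x => by positivity)]
    show exponentialPDF a x * expMeasure b (Ici (t - x)) = _
    rw [exponentialPDF_of_nonneg hx.1, tailExp hb (by linarith [hx.2] : (0:ℝ) ≤ t - x),
      ← ENNReal.ofReal_mul (by positivity)]
  have hval1 : ∫ x in Ico 0 t, a * Real.exp (-(a*x)) * Real.exp (-(b*(t-x)))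
      = a * E2 * ((Real.exp ((b-a)*t) - 1)/(b-a)) := by
    rw [Measure.restrict_congr_set Ico_ae_eq_Ioc, ← intervalIntegral.integral_of_le ht.le]
    rw [intervalIntegral.integral_congr (g := fun x => (a * E2) * Real.exp ((b-a)*x))
      (fun x _ => by
        have harg : -(a*x) + -(b*(t-x)) = -(b*t) + (b-a)*x := by ring
        show a * Real.exp (-(a*x)) * Real.exp (-(b*(t-x))) = a * Real.exp (-(b*t)) * Real.exp ((b-a)*x)
        rw [mul_assoc, ← Real.exp_add, harg, Real.exp_add, mul_assoc])]
    rw [intervalIntegral.integral_const_mul, int_exp_mul hcne t]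
  -- piece 2
  have hp2 : ∫⁻ x in Ici t, (exponentialPDF a * fun x => expMeasure b (Ici (t - x))) x
      = ENNReal.ofReal E1 := by
    rw [setLIntegral_congr_fun measurableSet_Ici (fun x (hx : t ≤ x) => ?_)]
    · rw [show (fun x => exponentialPDF a x) = exponentialPDF a from rfl,
        show ∫⁻ x in Ici t, exponentialPDF a x = expMeasure a (Ici t) from
          (withDensity_apply _ measurableSet_Ici).symm, tailExp ha ht.le]
    · show exponentialPDF a x * expMeasure b (Ici (t - x)) = exponentialPDF a x
      rw [tailExp_nonpos hb (by linarith : t - x ≤ 0), mul_one]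
  rw [hp1, hval1, hp2]
  have hJnn : 0 ≤ a * E2 * ((Real.exp ((b-a)*t) - 1)/(b-a)) := by
    have h2 : 0 ≤ (Real.exp ((b-a)*t) - 1)/(b-a) := by
      rcases lt_or_gt_of_ne hcne with h | h
      · apply div_nonneg_of_nonpos _ h.le
        have : (b-a)*t ≤ 0 := by nlinarith
        nlinarith [Real.exp_le_exp.2 this, Real.exp_zero]
      · apply div_nonneg _ h.le
        have : (0:ℝ) ≤ (b-a)*t := by positivity
        nlinarith [Real.exp_le_exp.2 this, Real.exp_zero]
    positivity
  rw [← ENNReal.ofReal_add hJnn (Real.exp_pos _).le]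
  congr 1
  field_simp
  nlinarith [hExp]

lemma ae_nonneg_of_exp_law {Ω : Type*} [MeasurableSpace Ω] (P : Measure Ω) {c : ℝ} {X : Ω → ℝ}
    (hmX : Measurable X) (hlaw : P.map X = expMeasure c) : ∀ᵐ ω ∂P, 0 ≤ X ω := by
  rw [ae_iff]
  have h1 : {ω | ¬ 0 ≤ X ω} = X ⁻¹' (Iio 0) := by ext ω; simp [not_le]
  rw [h1, ← Measure.map_apply hmX measurableSet_Iio, hlaw,
    show expMeasure c = volume.withDensity (exponentialPDF c) from rfl,
    withDensity_apply _ measurableSet_Iio]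
  exact lintegral_exponentialPDF_of_nonpos le_rfl

lemma inv_intervalIntegrable {t : ℝ} (ht : 0 ≤ t) :
    IntervalIntegrable (fun t : ℝ => (1+t)⁻¹) volume 0 t := by
  apply ContinuousOn.intervalIntegrable
  apply ContinuousOn.inv₀ (by fun_prop)
  intro x hx
  rw [Set.uIcc_of_le ht] at hx
  nlinarith [hx.1]

/-- Proposition 3: the average sum rate of two-user uplink distance-based NOMA. For
independent `X ~ Exp(l₁/ρ₁)` and `Y ~ Exp(l₂/ρ₂)` (received signal-power terms) with
`l₁/ρ₁ ≠ l₂/ρ₂`,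
`E[log₂(1 + X + Y)] = ((l₂/ρ₂) φ′(l₁,ρ₁) - (l₁/ρ₁) φ′(l₂,ρ₂)) / (l₂/ρ₂ - l₁/ρ₁)`. -/
theorem uplink_noma_average_sum_rate
    {Ω : Type*} [MeasurableSpace Ω] (P : Measure Ω) [IsProbabilityMeasure P]
    (l₁ l₂ ρ₁ ρ₂ : ℝ) (hl₁ : 0 < l₁) (hl₂ : 0 < l₂) (hρ₁ : 0 < ρ₁) (hρ₂ : 0 < ρ₂)
    (hne : l₁ / ρ₁ ≠ l₂ / ρ₂)
    (X Y : Ω → ℝ) (hmX : Measurable X) (hmY : Measurable Y)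
    (hlawX : P.map X = expMeasure (l₁ / ρ₁)) (hlawY : P.map Y = expMeasure (l₂ / ρ₂))
    (hind : IndepFun X Y P) :
    ∫ ω, Real.logb 2 (1 + X ω + Y ω) ∂P =
      ((l₂ / ρ₂) * phiPrime l₁ ρ₁ - (l₁ / ρ₁) * phiPrime l₂ ρ₂) /
        (l₂ / ρ₂ - l₁ / ρ₁) := by
  set a := l₁ / ρ₁ with hadef
  set b := l₂ / ρ₂ with hbdef
  have ha : 0 < a := div_pos hl₁ hρ₁
  have hb : 0 < b := div_pos hl₂ hρ₂
  have hab : a ≠ b := hne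
  have hcne : b - a ≠ 0 := sub_ne_zero.2 (Ne.symm hab)
  have hlog2 : Real.log 2 ≠ 0 := (Real.log_pos (by norm_num)).ne'
  have hX0 : ∀ᵐ ω ∂P, 0 ≤ X ω := ae_nonneg_of_exp_law P hmX hlawX
  have hY0 : ∀ᵐ ω ∂P, 0 ≤ Y ω := ae_nonneg_of_exp_law P hmY hlawY
  have hS0 : ∀ᵐ ω ∂P, 0 ≤ X ω + Y ω := by
    filter_upwards [hX0, hY0] with ω h1 h2; linarith
  have hmS : Measurable fun ω => X ω + Y ω := hmX.add hmY
  set Ia := ∫ t in Ioi (0:ℝ), Real.exp (-(a*t)) / (1+t) with hIa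
  set Ib := ∫ t in Ioi (0:ℝ), Real.exp (-(b*t)) / (1+t) with hIb
  have hmapprod : P.map (fun ω => (X ω, Y ω)) = (expMeasure a).prod (expMeasure b) := by
    rw [← hlawX, ← hlawY]
    exact (indepFun_iff_map_prod_eq_prod_map_map hmX.aemeasurable hmY.aemeasurable).mp hind
  -- the key computation
  have key : ∫ ω, Real.log (1 + (X ω + Y ω)) ∂P = (b/(b-a)) * Ia - (a/(b-a)) * Ib := by
    have hnnlog : 0 ≤ᵐ[P] fun ω => Real.log (1 + (X ω + Y ω)) := by
      filter_upwards [hS0] with ω h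
      exact Real.log_nonneg (by linarith)
    rw [integral_eq_lintegral_of_nonneg_ae hnnlog
      (Real.measurable_log.comp (by fun_prop)).aestronglyMeasurable]
    have hcong : ∫⁻ ω, ENNReal.ofReal (Real.log (1 + (X ω + Y ω))) ∂P
        = ∫⁻ ω, ENNReal.ofReal (∫ t in (0:ℝ)..(X ω + Y ω), (1+t)⁻¹) ∂P := by
      apply lintegral_congr_ae
      filter_upwards [hS0] with ω h
      rw [log_eq_integral h]
    rw [hcong, lintegral_comp_eq_lintegral_meas_le_mul P hS0 hmS.aemeasurable
      (fun t ht => inv_intervalIntegrable ht.le)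
      (by
        filter_upwards [ae_restrict_mem measurableSet_Ioi] with t (ht : (0:ℝ) < t)
        positivity)]
    have htail : ∀ᵐ t ∂(volume.restrict (Ioi (0:ℝ))),
        P {ω | t ≤ X ω + Y ω} * ENNReal.ofReal (1+t)⁻¹
          = ENNReal.ofReal (((b * Real.exp (-(a*t)) - a * Real.exp (-(b*t))) / (b - a)) * (1+t)⁻¹) := by
      filter_upwards [ae_restrict_mem measurableSet_Ioi] with t (ht : 0 < t)
      have hsmeas : MeasurableSet {p : ℝ × ℝ | t ≤ p.1 + p.2} :=
        measurableSet_le measurable_const (by fun_prop)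
      have h1 : P {ω | t ≤ X ω + Y ω}
          = ((expMeasure a).prod (expMeasure b)) {p : ℝ × ℝ | t ≤ p.1 + p.2} := by
        rw [← hmapprod, Measure.map_apply (hmX.prodMk hmY) hsmeas]
        rfl
      rw [h1, tail_sum ha hb hab ht, ← ENNReal.ofReal_mul (tail_nonneg ha hb hab ht.le)]
    rw [lintegral_congr_ae htail]
    have hFeq : (fun t : ℝ => ((b * Real.exp (-(a*t)) - a * Real.exp (-(b*t))) / (b - a)) * (1+t)⁻¹)
        = fun t : ℝ => (b/(b-a)) * (Real.exp (-(a*t)) / (1+t)) - (a/(b-a)) * (Real.exp (-(b*t)) / (1+t)) := by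
      funext t; ring
    have hIntF : IntegrableOn
        (fun t : ℝ => ((b * Real.exp (-(a*t)) - a * Real.exp (-(b*t))) / (b - a)) * (1+t)⁻¹)
        (Ioi 0) := by
      rw [hFeq]
      exact (((integrableOn_exp_div ha).const_mul _).sub ((integrableOn_exp_div hb).const_mul _))
    have hFnn : 0 ≤ᵐ[volume.restrict (Ioi (0:ℝ))]
        fun t : ℝ => ((b * Real.exp (-(a*t)) - a * Real.exp (-(b*t))) / (b - a)) * (1+t)⁻¹ := by
      filter_upwards [ae_restrict_mem measurableSet_Ioi] with t (ht : 0 < t)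
      have := tail_nonneg ha hb hab ht.le
      positivity
    rw [← ofReal_integral_eq_lintegral_ofReal hIntF hFnn,
      ENNReal.toReal_ofReal (integral_nonneg_of_ae hFnn)]
    calc ∫ t in Ioi (0:ℝ), ((b * Real.exp (-(a*t)) - a * Real.exp (-(b*t))) / (b - a)) * (1+t)⁻¹
        = ∫ t in Ioi (0:ℝ), ((b/(b-a)) * (Real.exp (-(a*t)) / (1+t)) - (a/(b-a)) * (Real.exp (-(b*t)) / (1+t))) := by
          rw [hFeq]
      _ = (b/(b-a)) * Ia - (a/(b-a)) * Ib := by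
          rw [integral_sub ((integrableOn_exp_div ha).const_mul _) ((integrableOn_exp_div hb).const_mul _),
            integral_const_mul, integral_const_mul]
  have hlogb : ∫ ω, Real.logb 2 (1 + X ω + Y ω) ∂P
      = (∫ ω, Real.log (1 + (X ω + Y ω)) ∂P) / Real.log 2 := by
    rw [← integral_div]
    congr 1
    funext ω
    rw [Real.logb, add_assoc]
  rw [hlogb, key, phiPrime_eq hρ₁, phiPrime_eq hρ₂, ← hadef, ← hbdef, ← hIa, ← hIb]
  clear_value Ia Ib
  clear hIa hIb
  clear_value a b
  rw [div_eq_div_iff (by simpa using hlog2) (by simpa [sub_eq_zero] using Ne.symm hab)]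
  field_simp
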